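/- Let (αⁿ) be a sequence of nonincreasing càdlàg functions on [0, τ] with values in [0,1], and let q : [0, τ] → ℝ be continuous. If αⁿ(s) → q(s) in probability for every s ∈ [0, τ], then sup_{s ∈ [0,τ]} |αⁿ(s) − q(s)| → 0 in probability. -/

import Mathlib

open MeasureTheory Filter

/-- Dini/Pólya-type theorem for random monotone functions: if nonincreasing `[0,1]`-valued
random functions converge pointwise in probability to a continuous deterministic limit on
`[0, τ]`, then they converge uniformly in probability. -/
theorem uniform_convergence_of_monotone_pointwise
    {Ω : Type*} [MeasurableSpace Ω] {μ : Measure Ω} [IsProbabilityMeasure μ]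
    (τ : ℝ) (hτ : 0 < τ)
    (α : ℕ → Ω → ℝ → ℝ)
    (hmono : ∀ n ω, AntitoneOn (α n ω) (Set.Icc (0:ℝ) τ))
    (hbd : ∀ n ω, ∀ s ∈ Set.Icc (0:ℝ) τ, α n ω s ∈ Set.Icc (0:ℝ) 1)
    (q : ℝ → ℝ) (hq : ContinuousOn q (Set.Icc (0:ℝ) τ))
    (hpt : ∀ s ∈ Set.Icc (0:ℝ) τ, ∀ ε > (0:ℝ),
      Tendsto (fun n => μ {ω | ε ≤ |α n ω s - q s|}) atTop (nhds 0)) :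
    ∀ ε > (0:ℝ),
      Tendsto (fun n => μ {ω | ε ≤ ⨆ s : Set.Icc (0:ℝ) τ, |α n ω s - q s|})
        atTop (nhds 0) := by
  intro ε hε
  -- uniform continuity of q
  obtain ⟨δ, hδ, hδq⟩ := Metric.uniformContinuousOn_iff.mp
    (isCompact_Icc.uniformContinuousOn_of_continuous hq) (ε/3) (by linarith)
  obtain ⟨k, hk⟩ := exists_nat_gt (τ/δ)
  have hk0' : 0 < (k:ℝ) := lt_trans (div_pos hτ hδ) hk
  have hk0 : 0 < k := by exact_mod_cast hk0'
  have hτk : τ / k < δ := by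
    rw [div_lt_iff₀ hk0']
    rw [div_lt_iff₀ hδ] at hk
    linarith
  set t : ℕ → ℝ := fun i => i * τ / k with ht
  have htmem : ∀ i ≤ k, t i ∈ Set.Icc (0:ℝ) τ := by
    intro i hi
    constructor
    · positivity
    · rw [div_le_iff₀ hk0']
      have : (i:ℝ) ≤ k := by exact_mod_cast hi
      nlinarith
  have hstep : ∀ i : ℕ, t (i+1) - t i = τ / k := by
    intro i
    simp only [ht]
    push_cast
    field_simp
    ring
  have hgrid : ∀ s ∈ Set.Icc (0:ℝ) τ, ∃ i, i < k ∧ t i ≤ s ∧ s ≤ t (i+1) := by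
    intro s hs
    set j := Nat.floor (s * k / τ) with hj
    refine ⟨min j (k-1), lt_of_le_of_lt (min_le_right _ _) (Nat.sub_lt hk0 one_pos), ?_, ?_⟩
    · have h1 : ((min j (k-1) : ℕ) : ℝ) ≤ s * k / τ := by
        refine le_trans ?_ (Nat.floor_le (by have := hs.1; positivity))
        exact_mod_cast min_le_left _ _
      rw [le_div_iff₀ hτ] at h1
      rw [div_le_iff₀ hk0']
      nlinarith
    · by_cases hjk : j ≤ k - 1
      · rw [min_eq_left hjk]
        have h2 : s * k / τ < j + 1 := Nat.lt_floor_add_one _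
        rw [div_lt_iff₀ hτ] at h2
        rw [le_div_iff₀ hk0']
        push_cast
        nlinarith
      · push_neg at hjk
        rw [min_eq_right hjk.le]
        rw [Nat.sub_add_cancel hk0]
        have : t k = τ := by
          simp only [ht]
          field_simp
        rw [this]
        exact hs.2
  -- the inclusion into grid events
  have hsub : ∀ n, {ω | ε ≤ ⨆ s : Set.Icc (0:ℝ) τ, |α n ω s - q s|} ⊆
      ⋃ i ∈ Finset.range (k+1), {ω | ε/3 ≤ |α n ω (t i) - q (t i)|} := by
    intro n ω hω
    by_contra hc
    simp only [Set.mem_iUnion, Set.mem_setOf_eq, not_exists, not_le, Finset.mem_range] at hc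
    have hgood : ∀ i ≤ k, |α n ω (t i) - q (t i)| < ε/3 := fun i hi =>
      hc i (Nat.lt_succ_of_le hi)
    have hsup : (⨆ s : Set.Icc (0:ℝ) τ, |α n ω s - q s|) ≤ 2*ε/3 := by
      haveI : Nonempty (Set.Icc (0:ℝ) τ) := ⟨⟨0, by simp [hτ.le]⟩⟩
      refine ciSup_le fun s => ?_
      obtain ⟨i, hik, his, hsi⟩ := hgrid s s.2
      have hti := htmem i hik.le
      have hti1 := htmem (i+1) hik
      have h1 : α n ω s ≤ α n ω (t i) := hmono n ω hti s.2 his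
      have h2 : α n ω (t (i+1)) ≤ α n ω s := hmono n ω s.2 hti1 hsi
      have hq1 : |α n ω (t i) - q (t i)| < ε/3 := hgood i hik.le
      have hq2 : |α n ω (t (i+1)) - q (t (i+1))| < ε/3 := hgood (i+1) hik
      have hd1 : dist (q (t i)) (q s) < ε/3 := by
        apply hδq _ hti _ s.2
        rw [Real.dist_eq, abs_sub_comm, abs_of_nonneg (by linarith)]
        have := hstep i
        linarith
      have hd2 : dist (q (t (i+1))) (q s) < ε/3 := by
        apply hδq _ hti1 _ s.2
        rw [Real.dist_eq, abs_of_nonneg (by linarith)]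
        have := hstep i
        linarith
      rw [Real.dist_eq] at hd1 hd2
      rw [abs_lt] at hq1 hq2 hd1 hd2
      rw [abs_le]
      constructor <;> linarith
    rw [Set.mem_setOf_eq] at hω
    linarith [le_trans hω hsup]
  have hle : ∀ n, μ {ω | ε ≤ ⨆ s : Set.Icc (0:ℝ) τ, |α n ω s - q s|} ≤
      ∑ i ∈ Finset.range (k+1), μ {ω | ε/3 ≤ |α n ω (t i) - q (t i)|} :=
    fun n => le_trans (measure_mono (hsub n)) (measure_biUnion_finset_le _ _)
  have hupper : Tendsto (fun n => ∑ i ∈ Finset.range (k+1),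
      μ {ω | ε/3 ≤ |α n ω (t i) - q (t i)|}) atTop (nhds 0) := by
    have := tendsto_finset_sum (Finset.range (k+1)) fun i hi =>
      hpt (t i) (htmem i (Nat.lt_succ_iff.mp (Finset.mem_range.mp hi))) (ε/3) (by linarith)
    simpa using this
  exact tendsto_of_tendsto_of_tendsto_of_le_of_le tendsto_const_nhds hupper
    (fun n => zero_le) hle
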